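/- Ancilla-recycling decomposition: let m, l ≥ 1 and k = m + l, and consider k+2 qutrits consisting of k control qutrits, one ancilla qutrit a, and one target qutrit t. Let A be the (k+2)-qutrit unitary that applies X+1 to the ancilla a when control qutrits 1,…,m are all in state |2⟩ (identity otherwise), and let B be the (k+2)-qutrit unitary that applies X+1 to the target t when control qutrits m+1,…,k together with the ancilla a are all in state |2⟩ (identity otherwise). Then (A·B)³ equals the (k+2)-qutrit unitary that applies X+1 to the target t when all k control qutrits are in state |2⟩ and acts as the identity otherwise (in particular it acts as the identity on the ancilla, whatever its state). -/

import Mathlib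

open Complex Matrix

noncomputable section

/-- The state space of `n` qutrits is indexed by functions `Fin n → Fin 3`. -/
abbrev QS (n : ℕ) : Type := Fin n → Fin 3

/-- Matrices (linear maps) on `n` qutrits. -/
abbrev QMat (n : ℕ) : Type := Matrix (QS n) (QS n) ℂ

/-- ω = e^{2πi/3}. -/
def ω3 : ℂ := Complex.exp (2 * Real.pi * Complex.I / 3)

/-- ζ = e^{2πi/9}. -/
def ζ9 : ℂ := Complex.exp (2 * Real.pi * Complex.I / 9)

/-- The single-qutrit Hadamard gate. -/
def Hgate : Matrix (Fin 3) (Fin 3) ℂ :=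
  (-Complex.I / (Real.sqrt 3 : ℂ)) • !![1, 1, 1; 1, ω3, ω3 ^ 2; 1, ω3 ^ 2, ω3]

/-- The single-qutrit S gate, S = ζ⁸·diag(1,1,ω). -/
def Sgate : Matrix (Fin 3) (Fin 3) ℂ := ζ9 ^ 8 • !![1, 0, 0; 0, 1, 0; 0, 0, ω3]

/-- The single-qutrit T gate, T = diag(1,ζ,ζ⁸). -/
def Tgate : Matrix (Fin 3) (Fin 3) ℂ := !![1, 0, 0; 0, ζ9, 0; 0, 0, ζ9 ^ 8]

/-- Apply the single-qutrit gate `A` on wire `i` of `n` qutrits, identity elsewhere. -/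
def applyOne {n : ℕ} (i : Fin n) (A : Matrix (Fin 3) (Fin 3) ℂ) : QMat n :=
  fun x y => if ∀ j, j ≠ i → x j = y j then A (x i) (y i) else 0

/-- The CX gate (CX|i,j⟩ = |i, i+j mod 3⟩) with control `c` and target `t`, identity
elsewhere. -/
def applyCX {n : ℕ} (c t : Fin n) : QMat n :=
  fun x y => if (∀ j, j ≠ t → x j = y j) ∧ x t = y c + y t then 1 else 0

/-- The `n`-qutrit Clifford+T generators: H, S or T on one wire, or CX on a pair of wires. -/
def CTGen (n : ℕ) : Set (QMat n) :=
  {M | (∃ i, M = applyOne i Hgate) ∨ (∃ i, M = applyOne i Sgate) ∨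
       (∃ i, M = applyOne i Tgate) ∨ (∃ c t, c ≠ t ∧ M = applyCX c t)}

/-- The `n`-qutrit Clifford+T group: the subgroup of the unitary group generated by the
Clifford+T generators. -/
def CliffordTGroup (n : ℕ) : Subgroup (Matrix.unitaryGroup (QS n) ℂ) :=
  Subgroup.closure {U : Matrix.unitaryGroup (QS n) ℂ | (U : QMat n) ∈ CTGen n}

/-- The `(k+m)`-qutrit unitary which applies `U` to the last `m` qutrits when the first `k`
qutrits are in the basis state `|v₁ … v_k⟩`, and is the identity otherwise. -/
def ctrlV (k m : ℕ) (v : Fin k → Fin 3) (U : QMat m) : QMat (k + m) :=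
  fun x y =>
    if ∀ i : Fin k, x (Fin.castAdd m i) = y (Fin.castAdd m i) then
      if ∀ i : Fin k, y (Fin.castAdd m i) = v i then
        U (fun j => x (Fin.natAdd k j)) (fun j => y (Fin.natAdd k j))
      else if ∀ j : Fin m, x (Fin.natAdd k j) = y (Fin.natAdd k j) then 1 else 0
    else 0

/-- The `|2⟩^{⊗k}`-controlled `U`: applies `U` to the last `m` qutrits when the first `k`
qutrits are all in state `|2⟩`, identity otherwise. -/
def ctrl2 (k m : ℕ) (U : QMat m) : QMat (k + m) := ctrlV k m (fun _ => 2) U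

/-- A single-qutrit gate viewed as a 1-qutrit matrix. -/
def oneQ (A : Matrix (Fin 3) (Fin 3) ℂ) : QMat 1 := fun x y => A (x 0) (y 0)

/-- The transposition X01, swapping |0⟩ and |1⟩ and fixing |2⟩. -/
def X01m : Matrix (Fin 3) (Fin 3) ℂ := !![0, 1, 0; 1, 0, 0; 0, 0, 1]

/-- The cyclic shift X+1, |t⟩ ↦ |t+1 mod 3⟩. -/
def Xp1m : Matrix (Fin 3) (Fin 3) ℂ := !![0, 0, 1; 1, 0, 0; 0, 1, 0]

/-- The `n`-qutrit unitary applying the single-qutrit gate `A` to wire `t` when every wire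
satisfying the control predicate `P` is in state |2⟩, and acting as the identity otherwise. -/
def ctrlP {n : ℕ} (P : Fin n → Prop) [DecidablePred P] (t : Fin n)
    (A : Matrix (Fin 3) (Fin 3) ℂ) : QMat n :=
  fun x y =>
    if ∀ j, j ≠ t → x j = y j then
      if ∀ i, P i → y i = 2 then A (x t) (y t)
      else if x t = y t then 1 else 0
    else 0

def permMat {n : ℕ} (f : QS n → QS n) : QMat n := fun x y => if x = f y then 1 else 0

lemma permMat_mul {n : ℕ} (f g : QS n → QS n) :
    permMat f * permMat g = permMat (f ∘ g) := by
  ext x y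
  simp only [permMat, Matrix.mul_apply, Function.comp_apply]
  rw [Finset.sum_eq_single (g y)]
  · simp
  · intro z _ hz; simp [hz]
  · simp

lemma Xp1m_apply (a b : Fin 3) : Xp1m a b = if a = b + 1 then 1 else 0 := by
  fin_cases a <;> fin_cases b <;>
    norm_num [Xp1m, Matrix.cons_val', Matrix.vecHead, Matrix.vecTail] <;>
    first
      | rw [if_pos (by decide)]
      | rw [if_neg (by decide)]
      | decide

def addIf {n : ℕ} (w : Fin n) (c : QS n → Prop) [DecidablePred c] : QS n → QS n :=
  fun y => Function.update y w (y w + if c y then 1 else 0)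

lemma ctrlP_perm {n : ℕ} (P : Fin n → Prop) [DecidablePred P] (t : Fin n) :
    ctrlP P t Xp1m = permMat (addIf t (fun y => ∀ i, P i → y i = 2)) := by
  ext x y
  simp only [ctrlP, permMat, addIf, Function.eq_update_iff]
  by_cases h1 : ∀ j, ¬j = t → x j = y j
  · by_cases h2 : ∀ i, P i → y i = 2
    · rw [if_pos h1, if_pos h2, if_pos h2, Xp1m_apply]
      by_cases h3 : x t = y t + 1
      · rw [if_pos h3, if_pos ⟨h3, h1⟩]
      · rw [if_neg h3, if_neg fun h => h3 h.1]
    · rw [if_pos h1, if_neg h2, if_neg h2, add_zero]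
      by_cases h3 : x t = y t
      · rw [if_pos h3, if_pos ⟨h3, h1⟩]
      · rw [if_neg h3, if_neg fun h => h3 h.1]
  · rw [if_neg h1, if_neg]
    exact fun h => h1 h.2

lemma fin3_cases (x : Fin 3) : x = 0 ∨ x = 1 ∨ x = 2 := by fin_cases x <;> simp


lemma fin3_add3 : ∀ x : Fin 3, x + 1 + 1 + 1 = x := by decide

lemma addIf_eq {n : ℕ} (w : Fin n) (c : QS n → Prop) [DecidablePred c] (y : QS n) :
    addIf w c y = if c y then Function.update y w (y w + 1) else y := by
  unfold addIf
  split_ifs <;> simp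

lemma key {n : ℕ} (a t : Fin n) (hat : a ≠ t)
    (cA cB cQ : QS n → Prop) [DecidablePred cA] [DecidablePred cB] [DecidablePred cQ]
    (hAa : ∀ z v, cA (Function.update z a v) ↔ cA z)
    (hAt : ∀ z v, cA (Function.update z t v) ↔ cA z)
    (hQa : ∀ z v, cQ (Function.update z a v) ↔ cQ z)
    (hQt : ∀ z v, cQ (Function.update z t v) ↔ cQ z)
    (hB : ∀ z, cB z ↔ cQ z ∧ z a = 2) (y : QS n) :
    addIf a cA (addIf t cB (addIf a cA (addIf t cB (addIf a cA (addIf t cB y))))) =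
      Function.update y t (y t + if cA y ∧ cQ y then 1 else 0) := by
  simp only [addIf_eq]
  by_cases hA : cA y
  · by_cases hQ : cQ y
    · rcases fin3_cases (y a) with h | h | h
      · -- y a = 0 : B fires on the third application
        have eB1 : (if cB y then Function.update y t (y t + 1) else y) = y := by
          rw [if_neg]; rw [hB, h]; rintro ⟨-, h2⟩; exact absurd h2 (by decide)
        rw [eB1, if_pos hA]
        set w1 := Function.update y a (y a + 1) with hw1
        have hw1a : w1 a = y a + 1 := by rw [hw1, Function.update_self]
        have eB2 : (if cB w1 then Function.update w1 t (w1 t + 1) else w1) = w1 := by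
          rw [if_neg]; rw [hB, hw1a, h]
          rintro ⟨-, h2⟩; exact absurd h2 (by decide)
        have hcA1 : cA w1 := by rw [hw1, hAa]; exact hA
        rw [eB2, if_pos hcA1]
        set w2 := Function.update w1 a (w1 a + 1) with hw2
        have hw2a : w2 a = y a + 1 + 1 := by rw [hw2, Function.update_self, hw1a]
        have eB3 : (if cB w2 then Function.update w2 t (w2 t + 1) else w2) =
            Function.update w2 t (w2 t + 1) := by
          rw [if_pos]; rw [hB, hw2a, h]
          exact ⟨by rw [hw2, hw1, hQa, hQa]; exact hQ, by decide⟩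
        rw [eB3]
        set w3 := Function.update w2 t (w2 t + 1) with hw3
        have hcA3 : cA w3 := by rw [hw3, hw2, hw1, hAt, hAa, hAa]; exact hA
        rw [if_pos hcA3, if_pos ⟨hA, hQ⟩]
        funext j
        simp only [hw3, hw2, hw1, Function.update_apply]
        by_cases hja : j = a
        · subst hja
          simp [hat, fin3_add3]
        · by_cases hjt : j = t
          · subst hjt
            simp [hat.symm, hja]
          · simp [hja, hjt]
      · -- y a = 1 : B fires on the second application
        have eB1 : (if cB y then Function.update y t (y t + 1) else y) = y := by
          rw [if_neg]; rw [hB, h]; rintro ⟨-, h2⟩; exact absurd h2 (by decide)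
        rw [eB1, if_pos hA]
        set w1 := Function.update y a (y a + 1) with hw1
        have hw1a : w1 a = y a + 1 := by rw [hw1, Function.update_self]
        have eB2 : (if cB w1 then Function.update w1 t (w1 t + 1) else w1) =
            Function.update w1 t (w1 t + 1) := by
          rw [if_pos]; rw [hB, hw1a, h]
          exact ⟨by rw [hw1, hQa]; exact hQ, by decide⟩
        rw [eB2]
        set w2 := Function.update w1 t (w1 t + 1) with hw2
        have hcA2 : cA w2 := by rw [hw2, hw1, hAt, hAa]; exact hA
        rw [if_pos hcA2]
        set w3 := Function.update w2 a (w2 a + 1) with hw3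
        have hw2a : w2 a = y a + 1 := by
          rw [hw2, Function.update_of_ne hat, hw1a]
        have hw3a : w3 a = y a + 1 + 1 := by rw [hw3, Function.update_self, hw2a]
        have eB3 : (if cB w3 then Function.update w3 t (w3 t + 1) else w3) = w3 := by
          rw [if_neg]; rw [hB, hw3a, h]
          rintro ⟨-, h2⟩; exact absurd h2 (by decide)
        have hcA3 : cA w3 := by rw [hw3, hAa]; exact hcA2
        rw [eB3, if_pos hcA3, if_pos ⟨hA, hQ⟩]
        funext j
        simp only [hw3, hw2, hw1, Function.update_apply]
        by_cases hja : j = a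
        · subst hja
          simp [hat, fin3_add3]
        · by_cases hjt : j = t
          · subst hjt
            simp [hat.symm, hja]
          · simp [hja, hjt]
      · -- y a = 2 : B fires on the first application
        have eB1 : cB y := by rw [hB]; exact ⟨hQ, h⟩
        rw [if_pos eB1]
        set w1 := Function.update y t (y t + 1) with hw1
        have hcA1 : cA w1 := by rw [hw1, hAt]; exact hA
        rw [if_pos hcA1]
        set w2 := Function.update w1 a (w1 a + 1) with hw2
        have hw1a : w1 a = y a := by rw [hw1, Function.update_of_ne hat]
        have hw2a : w2 a = y a + 1 := by rw [hw2, Function.update_self, hw1a]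
        have eB2 : (if cB w2 then Function.update w2 t (w2 t + 1) else w2) = w2 := by
          rw [if_neg]; rw [hB, hw2a, h]
          rintro ⟨-, h2⟩; exact absurd h2 (by decide)
        have hcA2 : cA w2 := by rw [hw2, hAa]; exact hcA1
        rw [eB2, if_pos hcA2]
        set w3 := Function.update w2 a (w2 a + 1) with hw3
        have hw3a : w3 a = y a + 1 + 1 := by rw [hw3, Function.update_self, hw2a]
        have eB3 : (if cB w3 then Function.update w3 t (w3 t + 1) else w3) = w3 := by
          rw [if_neg]; rw [hB, hw3a, h]
          rintro ⟨-, h2⟩; exact absurd h2 (by decide)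
        have hcA3 : cA w3 := by rw [hw3, hAa]; exact hcA2
        rw [eB3, if_pos hcA3, if_pos ⟨hA, hQ⟩]
        funext j
        simp only [hw3, hw2, hw1, Function.update_apply]
        by_cases hja : j = a
        · subst hja
          simp [hat, fin3_add3]
        · by_cases hjt : j = t
          · subst hjt
            simp [hat.symm, hja]
          · simp [hja, hjt]
    · -- cQ fails : every B is the identity, A fires three times
      have eB1 : (if cB y then Function.update y t (y t + 1) else y) = y := by
        rw [if_neg]; rw [hB]; rintro ⟨h1, -⟩; exact hQ h1
      rw [eB1, if_pos hA]
      set w1 := Function.update y a (y a + 1) with hw1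
      have eB2 : (if cB w1 then Function.update w1 t (w1 t + 1) else w1) = w1 := by
        rw [if_neg]; rw [hB, hw1, hQa]; rintro ⟨h1, -⟩; exact hQ h1
      have hcA1 : cA w1 := by rw [hw1, hAa]; exact hA
      rw [eB2, if_pos hcA1]
      set w2 := Function.update w1 a (w1 a + 1) with hw2
      have eB3 : (if cB w2 then Function.update w2 t (w2 t + 1) else w2) = w2 := by
        rw [if_neg]; rw [hB, hw2, hw1, hQa, hQa]; rintro ⟨h1, -⟩; exact hQ h1
      have hcA2 : cA w2 := by rw [hw2, hAa]; exact hcA1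
      rw [eB3, if_pos hcA2, if_neg (fun hc => hQ hc.2), add_zero,
        Function.update_eq_self]
      funext j
      simp only [hw2, hw1, Function.update_apply]
      by_cases hja : j = a
      · subst hja
        simp [fin3_add3]
      · simp [hja]
  · -- cA fails : every A is the identity, B fires 0 or 3 times
    by_cases hBy : cB y
    · have h2 : y a = 2 := ((hB y).mp hBy).2
      have hQ2 : cQ y := ((hB y).mp hBy).1
      rw [if_pos hBy]
      set w1 := Function.update y t (y t + 1) with hw1
      have eA1 : (if cA w1 then Function.update w1 a (w1 a + 1) else w1) = w1 := by
        rw [if_neg]; rw [hw1, hAt]; exact hA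
      have hcB1 : cB w1 := by
        rw [hB, hw1, Function.update_of_ne hat, h2]
        exact ⟨by rw [hQt]; exact hQ2, rfl⟩
      rw [eA1, if_pos hcB1]
      set w2 := Function.update w1 t (w1 t + 1) with hw2
      have eA2 : (if cA w2 then Function.update w2 a (w2 a + 1) else w2) = w2 := by
        rw [if_neg]; rw [hw2, hw1, hAt, hAt]; exact hA
      have hcB2 : cB w2 := by
        rw [hB, hw2, hw1, Function.update_of_ne hat,
          Function.update_of_ne hat, h2]
        exact ⟨by rw [hQt, hQt]; exact hQ2, rfl⟩
      rw [eA2, if_pos hcB2]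
      set w3 := Function.update w2 t (w2 t + 1) with hw3
      have eA3 : (if cA w3 then Function.update w3 a (w3 a + 1) else w3) = w3 := by
        rw [if_neg]; rw [hw3, hw2, hw1, hAt, hAt, hAt]; exact hA
      rw [eA3, if_neg (fun hc => hA hc.1), add_zero, Function.update_eq_self]
      funext j
      simp only [hw3, hw2, hw1, Function.update_apply]
      by_cases hjt : j = t
      · subst hjt
        simp [fin3_add3]
      · simp [hjt]
    · have eA : (if cA y then Function.update y a (y a + 1) else y) = y :=
        if_neg hA
      rw [if_neg hBy, eA, if_neg hBy, eA, if_neg hBy, eA,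
        if_neg (fun hc => hA hc.1), add_zero, Function.update_eq_self]

lemma forall_update_iff2 {n : ℕ} (P : Fin n → Prop) (w : Fin n)
    (h : ∀ i, P i → i ≠ w) (z : QS n) (v : Fin 3) :
    (∀ i, P i → Function.update z w v i = 2) ↔ (∀ i, P i → z i = 2) := by
  constructor <;> intro H i hi
  · have := H i hi; rwa [Function.update_of_ne (h i hi)] at this
  · rw [Function.update_of_ne (h i hi)]; exact H i hi


/-- ancilla-recycling decomposition: with k = m + l controls, one ancilla `a`
and one target `t`, if `A` applies X+1 to `a` controlled on the first m controls being |2⟩,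
and `B` applies X+1 to `t` controlled on the remaining l controls together with `a` being
|2⟩, then (A·B)³ is the X+1 gate on `t` controlled on all k controls being |2⟩ (acting as
the identity on the ancilla, whatever its state). -/
theorem ancilla_recycling_decomposition (m l : ℕ) (hm : 1 ≤ m) (hl : 1 ≤ l) :
    (ctrlP (fun i : Fin (m + l + 2) => (i : ℕ) < m) ⟨m + l, by omega⟩ Xp1m *
        ctrlP (fun i : Fin (m + l + 2) => m ≤ (i : ℕ) ∧ (i : ℕ) ≤ m + l)
          ⟨m + l + 1, by omega⟩ Xp1m) ^ 3 =
      ctrlP (fun i : Fin (m + l + 2) => (i : ℕ) < m + l) ⟨m + l + 1, by omega⟩ Xp1m := by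
  set a : Fin (m + l + 2) := ⟨m + l, by omega⟩ with ha
  set t : Fin (m + l + 2) := ⟨m + l + 1, by omega⟩ with ht
  have hat : a ≠ t := by simp [ha, ht, Fin.ext_iff]
  rw [ctrlP_perm, ctrlP_perm, ctrlP_perm, pow_succ, pow_succ, pow_one]
  simp only [permMat_mul]
  apply congrArg
  funext y
  simp only [Function.comp_apply]
  rw [key a t hat _ _ (fun z => ∀ i : Fin (m + l + 2), m ≤ (i : ℕ) ∧ (i : ℕ) < m + l → z i = 2)
      (fun z v => forall_update_iff2 _ a (fun i hi => by simp [ha, Fin.ext_iff]; omega) z v)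
      (fun z v => forall_update_iff2 _ t (fun i hi => by simp [ht, Fin.ext_iff]; omega) z v)
      (fun z v => forall_update_iff2 _ a (fun i hi => by simp [ha, Fin.ext_iff]; omega) z v)
      (fun z v => forall_update_iff2 _ t (fun i hi => by simp [ht, Fin.ext_iff]; omega) z v)
      ?_ y]
  · unfold addIf
    refine congrArg _ (congrArg _ (if_congr ?_ rfl rfl))
    constructor
    · rintro ⟨H1, H2⟩ i hi
      by_cases him : (i : ℕ) < m
      · exact H1 i him
      · exact H2 i ⟨by omega, hi⟩
    · intro H
      exact ⟨fun i hi => H i (by omega), fun i hi => H i (by omega)⟩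
  · intro z
    constructor
    · intro H
      refine ⟨fun i hi => H i ⟨hi.1, le_of_lt hi.2⟩, H a ⟨?_, ?_⟩⟩ <;> simp [ha]
    · rintro ⟨H1, H2⟩ i hi
      by_cases hi2 : (i : ℕ) < m + l
      · exact H1 i ⟨hi.1, hi2⟩
      · have : i = a := by
          rw [ha]; apply Fin.ext; simp; omega
        rw [this]; exact H2
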